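/- Let k : I × I → ℂ be a positive definite kernel with sup_{i} |k(i,i)| ≤ 1 on a countable index set I, and let T = (T_{ij}) be a bounded operator on ℓ²(I) ⊗ H given by a matrix of operators. Then the Schur multiplier M_k(T) with entries (M_k(T))_{ij} = k(i,j)T_{ij} satisfies ‖M_k(T)‖ ≤ ‖T‖. -/

import Mathlib

open scoped ComplexOrder ENNReal
open scoped Matrix

/-- A kernel `k : I × I → ℂ` is positive definite if every finite matrix `(k(iₐ, i_b))` is
positive semidefinite. -/
def IsPosDefKernel {I : Type*} (k : I → I → ℂ) : Prop :=
  ∀ (n : ℕ) (g : Fin n → I) (c : Fin n → ℂ),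
    0 ≤ ∑ i, ∑ j, (starRingEnd ℂ) (c i) * c j * k (g i) (g j)

lemma IsPosDefKernel.fintype {I : Type*} {k : I → I → ℂ} (hk : IsPosDefKernel k)
    {n : Type*} [Fintype n] (g : n → I) (c : n → ℂ) :
    0 ≤ ∑ i, ∑ j, (starRingEnd ℂ) (c i) * c j * k (g i) (g j) := by
  classical
  let e := (Fintype.equivFin n).symm
  have h := hk (Fintype.card n) (g ∘ e) (c ∘ e)
  have : ∑ i, ∑ j, (starRingEnd ℂ) ((c ∘ e) i) * (c ∘ e) j * k ((g ∘ e) i) ((g ∘ e) j)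
      = ∑ i, ∑ j, (starRingEnd ℂ) (c i) * c j * k (g i) (g j) := by
    rw [← Equiv.sum_comp e (fun i => ∑ j, (starRingEnd ℂ) (c i) * c j * k (g i) (g j))]
    exact Finset.sum_congr rfl fun i _ =>
      Equiv.sum_comp e (fun j => (starRingEnd ℂ) (c (e i)) * c j * k (g (e i)) (g j))
  rwa [← this]

lemma posSemidef_of_forall {n : Type*} [Fintype n] [DecidableEq n] {M : Matrix n n ℂ}
    (h : ∀ x : n → ℂ, 0 ≤ dotProduct (star x) (M.mulVec x)) : M.PosSemidef := by
  refine Matrix.posSemidef_iff_dotProduct_mulVec.2 ⟨?_, h⟩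
  rw [Matrix.isHermitian_iff_isSymmetric]
  rw [LinearMap.isSymmetric_iff_inner_map_self_real]
  rw [(WithLp.equiv 2 (n → ℂ)).symm.surjective.forall]
  intro x
  simp only [WithLp.equiv_symm_apply, Matrix.toLpLin_toLp, EuclideanSpace.inner_toLp_toLp,
    Matrix.toLin'_apply]
  have h0 := h x
  rw [Complex.nonneg_iff] at h0
  have him : (dotProduct (star x) (M.mulVec x)).im = 0 := by
    have := h0.2; simpa using this.symm
  have hz : (starRingEnd ℂ) (dotProduct (star x) (M.mulVec x))
      = dotProduct (star x) (M.mulVec x) := Complex.conj_eq_iff_im.2 him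
  have hflip : dotProduct (star (M.mulVec x)) x
      = (starRingEnd ℂ) (dotProduct (star x) (M.mulVec x)) := by
    simp [dotProduct, map_sum, mul_comm]
  rw [dotProduct_comm x, hflip, hz, hz]

open scoped MatrixOrder in
lemma exists_factor {I : Type*} {k : I → I → ℂ} (hk : IsPosDefKernel k)
    (hkdiag : ∀ i, ‖k i i‖ ≤ 1) (E : Finset I) :
    ∃ b : E → I → ℂ,
      (∀ i ∈ E, ∀ j ∈ E, k i j = ∑ l : E, (starRingEnd ℂ) (b l i) * b l j) ∧
      (∀ j : I, ∑ l : E, ‖b l j‖ ^ 2 ≤ 1) := by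
  classical
  set M : Matrix E E ℂ := fun a b => k a b with hMdef
  have hM : M.PosSemidef := by
    apply posSemidef_of_forall
    intro x
    have h := hk.fintype (fun a : E => (a : I)) x
    have heq : dotProduct (star x) (M.mulVec x)
        = ∑ a : E, ∑ c : E, (starRingEnd ℂ) (x a) * x c * k a c := by
      simp only [dotProduct, Matrix.mulVec, Pi.star_apply, Finset.mul_sum]
      exact Finset.sum_congr rfl fun a _ => Finset.sum_congr rfl fun c _ => by
        simp only [hMdef, starRingEnd_apply]; ring
    rw [heq]; exact h
  set B := CFC.sqrt M with hBdef
  have hBB : B * B = M := CFC.sqrt_mul_sqrt_self M hM.nonneg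
  have hBH : Bᴴ = B := (Matrix.nonneg_iff_posSemidef.1 (CFC.sqrt_nonneg M)).1
  have hBsym : ∀ a c, B a c = (starRingEnd ℂ) (B c a) := fun a c => by
    conv_lhs => rw [← hBH]
    rfl
  have habs : ∀ z : ℂ, (starRingEnd ℂ) z * z = ((‖z‖ ^ 2 : ℝ) : ℂ) := fun z => by
    rw [mul_comm, Complex.mul_conj]
    norm_cast
    rw [Complex.sq_norm]
  refine ⟨fun l j => if h : j ∈ E then B l ⟨j, h⟩ else 0, ?_, ?_⟩
  · intro i hi j hj
    have h0 : M ⟨i, hi⟩ ⟨j, hj⟩ = ∑ l : E, B ⟨i, hi⟩ l * B l ⟨j, hj⟩ := by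
      rw [← hBB]; rfl
    simp only [dif_pos hi, dif_pos hj]
    rw [show k i j = M ⟨i, hi⟩ ⟨j, hj⟩ from rfl, h0]
    exact Finset.sum_congr rfl fun l _ => by rw [hBsym ⟨i, hi⟩ l]
  · intro j
    by_cases hj : j ∈ E
    · have h0 : M ⟨j, hj⟩ ⟨j, hj⟩ = ∑ l : E, B ⟨j, hj⟩ l * B l ⟨j, hj⟩ := by
        rw [← hBB]; rfl
      have hsum : (∑ l : E, ((‖B l ⟨j, hj⟩‖ ^ 2 : ℝ) : ℂ)) = k j j := by
        rw [show k j j = M ⟨j, hj⟩ ⟨j, hj⟩ from rfl, h0]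
        exact Finset.sum_congr rfl fun l _ => by rw [hBsym ⟨j, hj⟩ l, habs]
      have hre : (∑ l : E, ‖B l ⟨j, hj⟩‖ ^ 2) = (k j j).re := by
        exact_mod_cast congrArg Complex.re hsum
      simp only [dif_pos hj]
      calc ∑ l : E, ‖B l ⟨j, hj⟩‖ ^ 2 = (k j j).re := hre
        _ ≤ ‖k j j‖ := Complex.re_le_norm _
        _ ≤ 1 := hkdiag j
    · simp [dif_neg hj]

lemma two_toReal : ((2:ℝ≥0∞)).toReal = (2:ℝ) := by norm_num

lemma rpow_toReal_two (x : ℝ) : x ^ ((2:ℝ≥0∞)).toReal = x ^ 2 := by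
  rw [show ((2:ℝ≥0∞)).toReal = ((2:ℕ):ℝ) by norm_num, Real.rpow_natCast]

lemma claimA {I H : Type*}
    [NormedAddCommGroup H] [InnerProductSpace ℂ H] [CompleteSpace H]
    {k : I → I → ℂ} (hk : IsPosDefKernel k) (hkdiag : ∀ i, ‖k i i‖ ≤ 1)
    (Tmat : I → I → H →L[ℂ] H)
    (T : lp (fun _ : I => H) 2 →L[ℂ] lp (fun _ : I => H) 2)
    (hT : ∀ (ξ : lp (fun _ : I => H) 2) (i : I),
      (T ξ : ∀ _ : I, H) i = ∑' j : I, Tmat i j (ξ j))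
    (ξ : lp (fun _ : I => H) 2) (F G : Finset I) :
    ∑ i ∈ F, ‖∑ j ∈ G, k i j • Tmat i j (ξ j)‖ ^ 2 ≤ (‖T‖ * ‖ξ‖) ^ 2 := by
  classical
  set E := F ∪ G with hE
  obtain ⟨b, hb, hbd⟩ := exists_factor hk hkdiag E
  set v : I → H := fun i => ∑ j ∈ G, k i j • Tmat i j (ξ j) with hv
  set A := ∑ i ∈ F, ‖v i‖ ^ 2 with hAdef
  have hA0 : 0 ≤ A := Finset.sum_nonneg fun _ _ => sq_nonneg _
  set ξl : E → lp (fun _ : I => H) 2 :=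
    fun l => ∑ j ∈ G, lp.single 2 j (b l j • ξ j) with hξl
  set ηl : E → lp (fun _ : I => H) 2 :=
    fun l => ∑ i ∈ F, lp.single 2 i (b l i • v i) with hηl
  have h2 : (0:ℝ) < ((2:ℝ≥0∞)).toReal := by norm_num
  -- coordinates of ξl
  have hξlc : ∀ (l : E) (j : I), (ξl l : ∀ _ : I, H) j = if j ∈ G then b l j • ξ j else 0 := by
    intro l j
    simp only [hξl, lp.coeFn_sum, Finset.sum_apply, lp.single_apply, Pi.single_apply, Finset.sum_ite_eq, Finset.sum_dite_eq', Finset.sum_dite_eq]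
  -- norms of ξl
  have hξln : ∀ l : E, ‖ξl l‖ ^ 2 = ∑ j ∈ G, ‖b l j‖ ^ 2 * ‖ξ j‖ ^ 2 := by
    intro l
    have := lp.norm_sum_single (E := fun _ : I => H) h2 (fun j => b l j • ξ j) G
    rw [rpow_toReal_two] at this
    rw [this]
    exact Finset.sum_congr rfl fun j _ => by
      rw [rpow_toReal_two, norm_smul, mul_pow]
  have hηln : ∀ l : E, ‖ηl l‖ ^ 2 = ∑ i ∈ F, ‖b l i‖ ^ 2 * ‖v i‖ ^ 2 := by
    intro l
    have := lp.norm_sum_single (E := fun _ : I => H) h2 (fun i => b l i • v i) F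
    rw [rpow_toReal_two] at this
    rw [this]
    exact Finset.sum_congr rfl fun i _ => by
      rw [rpow_toReal_two, norm_smul, mul_pow]
  have hξsum : ∑ l : E, ‖ξl l‖ ^ 2 ≤ ‖ξ‖ ^ 2 := by
    calc ∑ l : E, ‖ξl l‖ ^ 2 = ∑ j ∈ G, (∑ l : E, ‖b l j‖ ^ 2) * ‖ξ j‖ ^ 2 := by
          simp_rw [hξln, Finset.sum_mul]
          exact Finset.sum_comm
      _ ≤ ∑ j ∈ G, 1 * ‖ξ j‖ ^ 2 := by
          refine Finset.sum_le_sum fun j _ => ?_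
          exact mul_le_mul_of_nonneg_right (hbd j) (sq_nonneg _)
      _ = ∑ j ∈ G, ‖ξ j‖ ^ 2 := by simp
      _ ≤ ‖ξ‖ ^ 2 := by
          have := lp.sum_rpow_le_norm_rpow h2 ξ G
          rw [rpow_toReal_two] at this
          refine le_trans (le_of_eq ?_) this
          exact Finset.sum_congr rfl fun j _ => (rpow_toReal_two _).symm
  have hηsum : ∑ l : E, ‖ηl l‖ ^ 2 ≤ A := by
    calc ∑ l : E, ‖ηl l‖ ^ 2 = ∑ i ∈ F, (∑ l : E, ‖b l i‖ ^ 2) * ‖v i‖ ^ 2 := by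
          simp_rw [hηln, Finset.sum_mul]
          exact Finset.sum_comm
      _ ≤ ∑ i ∈ F, 1 * ‖v i‖ ^ 2 := by
          refine Finset.sum_le_sum fun i _ => ?_
          exact mul_le_mul_of_nonneg_right (hbd i) (sq_nonneg _)
      _ = A := by simp [hAdef]
  -- coordinates of T (ξl l)
  have hTξc : ∀ (l : E) (i : I), (T (ξl l) : ∀ _ : I, H) i = ∑ j ∈ G, b l j • Tmat i j (ξ j) := by
    intro l i
    rw [hT]
    rw [tsum_eq_sum (s := G) (fun j hj => by rw [hξlc l j, if_neg hj, map_zero])]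
    exact Finset.sum_congr rfl fun j hj => by rw [hξlc l j, if_pos hj, map_smul]
  -- the inner product identity
  have hinner : ∑ l : E, (inner ℂ (ηl l) (T (ξl l)) : ℂ) = (A : ℂ) := by
    have hstep : ∀ l : E, (inner ℂ (ηl l) (T (ξl l)) : ℂ)
        = ∑ i ∈ F, ∑ j ∈ G, ((starRingEnd ℂ) (b l i) * b l j) * (inner ℂ (v i) (Tmat i j (ξ j)) : ℂ) := by
      intro l
      rw [hηl]
      rw [sum_inner]
      refine Finset.sum_congr rfl fun i _ => ?_
      rw [lp.inner_single_left, inner_smul_left, hTξc l i, inner_sum, Finset.mul_sum]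
      refine Finset.sum_congr rfl fun j _ => ?_
      rw [inner_smul_right]
      ring
    rw [Finset.sum_congr rfl fun l _ => hstep l]
    rw [Finset.sum_comm]
    have : ∀ i ∈ F, ∑ l : E, ∑ j ∈ G, ((starRingEnd ℂ) (b l i) * b l j) * (inner ℂ (v i) (Tmat i j (ξ j)) : ℂ)
        = (inner ℂ (v i) (v i) : ℂ) := by
      intro i hi
      rw [Finset.sum_comm]
      have hk_ij : ∀ j ∈ G, (∑ l : E, (starRingEnd ℂ) (b l i) * b l j) = k i j := fun j hj =>
        (hb i (Finset.mem_union_left _ hi) j (Finset.mem_union_right _ hj)).symm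
      calc ∑ j ∈ G, ∑ l : E, ((starRingEnd ℂ) (b l i) * b l j) * (inner ℂ (v i) (Tmat i j (ξ j)) : ℂ)
          = ∑ j ∈ G, k i j * (inner ℂ (v i) (Tmat i j (ξ j)) : ℂ) := by
            refine Finset.sum_congr rfl fun j hj => ?_
            rw [← Finset.sum_mul, hk_ij j hj]
        _ = (inner ℂ (v i) (v i) : ℂ) := by
            rw [hv]
            simp only [inner_sum, inner_smul_right]
    rw [Finset.sum_congr rfl this]
    rw [hAdef]
    push_cast
    exact Finset.sum_congr rfl fun i _ => inner_self_eq_norm_sq_to_K (𝕜 := ℂ) (v i)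
  -- the estimate
  have key : A ≤ ‖T‖ * (Real.sqrt A * ‖ξ‖) := by
    have h1 : A = ‖(A : ℂ)‖ := by
      rw [Complex.norm_real]
      exact (Real.norm_of_nonneg hA0).symm
    calc A = ‖∑ l : E, (inner ℂ (ηl l) (T (ξl l)) : ℂ)‖ := by rw [hinner, ← h1]
      _ ≤ ∑ l : E, ‖(inner ℂ (ηl l) (T (ξl l)) : ℂ)‖ := norm_sum_le _ _
      _ ≤ ∑ l : E, ‖ηl l‖ * (‖T‖ * ‖ξl l‖) := by
          refine Finset.sum_le_sum fun l _ => ?_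
          exact le_trans (norm_inner_le_norm _ _)
            (mul_le_mul_of_nonneg_left (T.le_opNorm _) (norm_nonneg _))
      _ = ‖T‖ * ∑ l : E, ‖ηl l‖ * ‖ξl l‖ := by
          rw [Finset.mul_sum]; exact Finset.sum_congr rfl fun l _ => by ring
      _ ≤ ‖T‖ * (Real.sqrt A * ‖ξ‖) := by
          refine mul_le_mul_of_nonneg_left ?_ (norm_nonneg _)
          have hcs : ∑ l : E, Real.sqrt (‖ηl l‖ ^ 2) * Real.sqrt (‖ξl l‖ ^ 2)
              ≤ Real.sqrt (∑ l : E, ‖ηl l‖ ^ 2) * Real.sqrt (∑ l : E, ‖ξl l‖ ^ 2) :=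
            Real.sum_sqrt_mul_sqrt_le _ (fun l => sq_nonneg _) (fun l => sq_nonneg _)
          have heq : ∑ l : E, ‖ηl l‖ * ‖ξl l‖
              = ∑ l : E, Real.sqrt (‖ηl l‖ ^ 2) * Real.sqrt (‖ξl l‖ ^ 2) := by
            refine Finset.sum_congr rfl fun l _ => ?_
            rw [Real.sqrt_sq (norm_nonneg _), Real.sqrt_sq (norm_nonneg _)]
          rw [heq]
          refine le_trans hcs ?_
          have h3 : Real.sqrt (∑ l : E, ‖ηl l‖ ^ 2) ≤ Real.sqrt A := Real.sqrt_le_sqrt hηsum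
          have h4 : Real.sqrt (∑ l : E, ‖ξl l‖ ^ 2) ≤ ‖ξ‖ := by
            refine le_trans (Real.sqrt_le_sqrt hξsum) ?_
            rw [Real.sqrt_sq (norm_nonneg _)]
          exact mul_le_mul h3 h4 (Real.sqrt_nonneg _) (Real.sqrt_nonneg _)
  nlinarith [Real.sq_sqrt hA0, Real.sqrt_nonneg A, norm_nonneg T, norm_nonneg ξ,
    mul_nonneg (norm_nonneg T) (norm_nonneg ξ)]

/-- Let `k` be a positive definite kernel on a countable index set `I` with
`sup_i |k(i,i)| ≤ 1`, and let `T` be a bounded operator on `ℓ²(I) ⊗ H = ℓ²(I, H)` given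
by a matrix `(T_{ij})` of operators on `H`.  Then the Schur multiplier `M_k(T) = S`, the
operator with matrix entries `k(i,j) T_{ij}`, satisfies `‖M_k(T)‖ ≤ ‖T‖`. -/
theorem schurMultiplier_norm_le {I H : Type*} [Countable I]
    [NormedAddCommGroup H] [InnerProductSpace ℂ H] [CompleteSpace H]
    (k : I → I → ℂ) (hk : IsPosDefKernel k) (hkdiag : ∀ i : I, ‖k i i‖ ≤ 1)
    (Tmat : I → I → H →L[ℂ] H)
    (T S : lp (fun _ : I => H) 2 →L[ℂ] lp (fun _ : I => H) 2)
    (hT : ∀ (ξ : lp (fun _ : I => H) 2) (i : I), (T ξ : ∀ _ : I, H) i = ∑' j : I, Tmat i j (ξ j))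
    (hS : ∀ (ξ : lp (fun _ : I => H) 2) (i : I),
      (S ξ : ∀ _ : I, H) i = ∑' j : I, k i j • Tmat i j (ξ j)) :
    ‖S‖ ≤ ‖T‖ := by
  classical
  refine S.opNorm_le_bound (norm_nonneg T) fun ξ => ?_
  have hC : 0 ≤ ‖T‖ * ‖ξ‖ := mul_nonneg (norm_nonneg _) (norm_nonneg _)
  refine lp.norm_le_of_forall_sum_le (by norm_num) hC fun F => ?_
  have hgoal : ∑ i ∈ F, ‖(S ξ : ∀ _ : I, H) i‖ ^ 2 ≤ (‖T‖ * ‖ξ‖) ^ 2 := by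
    set f : I → I → H := fun i j => k i j • Tmat i j (ξ j) with hf
    set F' := F.filter (fun i => Summable (f i)) with hF'
    have hzero : ∀ i ∈ F, i ∉ F' → ‖(S ξ : ∀ _ : I, H) i‖ ^ 2 = 0 := by
      intro i hi hni
      have : ¬ Summable (f i) := by
        intro hsm
        exact hni (Finset.mem_filter.2 ⟨hi, hsm⟩)
      rw [hS, tsum_eq_zero_of_not_summable this]
      simp
    rw [← Finset.sum_subset (Finset.filter_subset _ F) hzero]
    have htend : Filter.Tendsto (fun G : Finset I => ∑ i ∈ F', ‖∑ j ∈ G, f i j‖ ^ 2)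
        Filter.atTop (nhds (∑ i ∈ F', ‖(S ξ : ∀ _ : I, H) i‖ ^ 2)) := by
      refine tendsto_finset_sum _ fun i hi => ?_
      have hsm : Summable (f i) := (Finset.mem_filter.1 hi).2
      have hhs : HasSum (f i) ((S ξ : ∀ _ : I, H) i) := by
        rw [hS]; exact hsm.hasSum
      exact (hhs.norm.pow 2)
    refine le_of_tendsto htend (Filter.Eventually.of_forall fun G => ?_)
    exact claimA hk hkdiag Tmat T hT ξ F' G
  calc ∑ i ∈ F, ‖(S ξ : ∀ _ : I, H) i‖ ^ (2:ℝ≥0∞).toReal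
      = ∑ i ∈ F, ‖(S ξ : ∀ _ : I, H) i‖ ^ 2 :=
        Finset.sum_congr rfl fun i _ => rpow_toReal_two _
    _ ≤ (‖T‖ * ‖ξ‖) ^ 2 := hgoal
    _ = (‖T‖ * ‖ξ‖) ^ (2:ℝ≥0∞).toReal := (rpow_toReal_two _).symm
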